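/- Let M be Lebesgue measure on X = X_1 × ... × X_q with open intervals X_k ⊂ R, and let (g_ξ)_{ξ∈Ξ} be strictly positive probability densities such that: (i) any finite family of distinct g_ξ is linearly independent in L¹(M) (identifiability), and (ii) for each ξ, k, and fixed coordinates x_i (i ≠ k), the map t ↦ g_ξ(x_1,...,x_{k−1},t,x_{k+1},...,x_q) extends to a holomorphic function on an open subset of C containing X_k. Then the family is locally identifiable: for distinct ξ(1),...,ξ(m) ∈ Ξ and reals β_1,...,β_m, if Leb_q{x ∈ X : Σ_j β_j g_{ξ(j)}(x) = 0} > 0 then β_1 = ... = β_m = 0. -/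

import Mathlib

open MeasureTheory Filter Set Topology


-- aux 1: uncountable set in ℝ has an accumulation point in itself
lemma aux_exists_accPt {S : Set ℝ} (hS : ¬ S.Countable) : ∃ x ∈ S, AccPt x (𝓟 S) := by
  by_contra hcon
  push_neg at hcon
  apply hS
  have key : ∀ x ∈ S, ∃ p : ℚ × ℚ, x ∈ Set.Ioo (p.1 : ℝ) (p.2 : ℝ) ∧
      Set.Ioo (p.1 : ℝ) (p.2 : ℝ) ∩ S ⊆ {x} := by
    intro x hx
    have h1 : ¬ AccPt x (𝓟 S) := hcon x hx
    rw [accPt_iff_frequently] at h1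
    rw [Filter.not_frequently] at h1
    rw [Metric.eventually_nhds_iff] at h1
    obtain ⟨ε, hε, hball⟩ := h1
    obtain ⟨a, ha1, ha2⟩ := exists_rat_btwn (show x - ε < x by linarith)
    obtain ⟨b, hb1, hb2⟩ := exists_rat_btwn (show x < x + ε by linarith)
    refine ⟨(a, b), ⟨ha2, hb1⟩, ?_⟩
    rintro y ⟨⟨hy1, hy2⟩, hyS⟩
    by_contra hne
    exact hball (show dist y x < ε by rw [Real.dist_eq]; rw [abs_lt]; constructor <;> nlinarith)
      ⟨hne, hyS⟩
  have : S ⊆ ⋃ p : ℚ × ℚ, {x | x ∈ S ∧ x ∈ Set.Ioo (p.1 : ℝ) (p.2 : ℝ) ∧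
      Set.Ioo (p.1 : ℝ) (p.2 : ℝ) ∩ S ⊆ {x}} := by
    intro x hx
    obtain ⟨p, hp1, hp2⟩ := key x hx
    exact Set.mem_iUnion.2 ⟨p, hx, hp1, hp2⟩
  refine Set.Countable.mono this (Set.countable_iUnion fun p => ?_)
  apply Set.Subsingleton.countable
  rintro x ⟨hxS, hx1, hx2⟩ y ⟨hyS, hy1, hy2⟩
  have := hx2 ⟨hy1, hyS⟩
  simpa using this.symm


-- Lemma A: identity theorem on an interval
lemma aux_identity {A : Set ℝ} (hA : A.OrdConnected) (φ : ℝ → ℝ)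
    (U : Set ℂ) (F : ℂ → ℂ) (hU : IsOpen U) (hsub : Complex.ofReal '' A ⊆ U)
    (hF : DifferentiableOn ℂ F U) (heq : ∀ t ∈ A, F (t : ℂ) = (φ t : ℂ))
    (S : Set ℝ) (hSA : S ⊆ A) (hSunc : ¬ S.Countable) (hS0 : ∀ t ∈ S, φ t = 0) :
    ∀ t ∈ A, φ t = 0 := by
  obtain ⟨z, hzS, hzacc⟩ := aux_exists_accPt hSunc
  have hzA : z ∈ A := hSA hzS
  have hzU : (z : ℂ) ∈ U := hsub ⟨z, hzA, rfl⟩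
  have han : AnalyticOnNhd ℂ F U := hF.analyticOnNhd hU
  set W := connectedComponentIn U (z : ℂ) with hW
  have hWU : W ⊆ U := connectedComponentIn_subset U _
  have hWopen : IsOpen W := hU.connectedComponentIn
  have hWconn : IsPreconnected W :=
    (isConnected_connectedComponentIn_iff.mpr hzU).isPreconnected
  have hzW : (z : ℂ) ∈ W := mem_connectedComponentIn hzU
  -- frequently zero near z
  have htend : Tendsto (fun t : ℝ => (t : ℂ)) (𝓝[≠] z) (𝓝[≠] (z : ℂ)) := by
    apply Tendsto.inf
    · exact Complex.continuous_ofReal.continuousAt.tendsto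
    · simp only [tendsto_principal, eventually_principal]
      intro t ht
      simp only [Set.mem_compl_iff, Set.mem_singleton_iff] at *
      exact fun h => ht (by exact_mod_cast h)
  have hfreqS : ∃ᶠ t in 𝓝[≠] z, t ∈ S := by
    rw [accPt_iff_frequently] at hzacc
    rw [frequently_nhdsWithin_iff]
    exact hzacc.mono (fun y hy => ⟨hy.2, hy.1⟩)
  have hfreq : ∃ᶠ w in 𝓝[≠] (z : ℂ), F w = 0 := by
    apply htend.frequently
    refine hfreqS.mono fun t ht => ?_
    rw [heq t (hSA ht), hS0 t ht]
    simp
  have hEq : Set.EqOn F 0 W :=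
    (han.mono hWU).eqOn_zero_of_preconnected_of_frequently_eq_zero hWconn hzW hfreq
  have himg : Complex.ofReal '' A ⊆ W := by
    exact ((hA.isPreconnected).image _ Complex.continuous_ofReal.continuousOn).subset_connectedComponentIn ⟨z, hzA, rfl⟩ hsub
  intro t ht
  have h0 : F (t : ℂ) = 0 := hEq (himg ⟨t, ht, rfl⟩)
  rw [heq t ht] at h0
  exact_mod_cast h0

section Fubini
variable {n : ℕ} (k : Fin (n + 1))

lemma aux_update_eq (x : Fin (n + 1) → ℝ) (t : ℝ) :
    Function.update x k t = Fin.insertNth k t (Fin.removeNth k x) := by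
  rw [Fin.insertNth_removeNth]

-- the equivalence
noncomputable def eqv (k : Fin (n+1)) :
    (Fin (n + 1) → ℝ) ≃ᵐ ℝ × (Fin n → ℝ) :=
  MeasurableEquiv.piFinSuccAbove (fun _ => ℝ) k

lemma eqv_symm_apply (t : ℝ) (w : Fin n → ℝ) :
    (eqv k).symm (t, w) = Fin.insertNth k t w := rfl

lemma eqv_measurePreserving :
    MeasurePreserving (eqv k) (volume : Measure (Fin (n+1) → ℝ))
      ((volume : Measure ℝ).prod (volume : Measure (Fin n → ℝ))) := by
  have := MeasureTheory.volume_preserving_piFinSuccAbove (fun _ : Fin (n+1) => ℝ) k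
  exact this

lemma aux_slice_measurable {S : Set (Fin (n + 1) → ℝ)} (hS : MeasurableSet S) :
    Measurable fun x : Fin (n + 1) → ℝ =>
      volume {t : ℝ | Function.update x k t ∈ S} := by
  have hS2 : MeasurableSet ((eqv k).symm ⁻¹' S) := (eqv k).symm.measurable hS
  have key : ∀ x : Fin (n+1) → ℝ, {t : ℝ | Function.update x k t ∈ S}
      = (fun t => (t, Fin.removeNth k x)) ⁻¹' ((eqv k).symm ⁻¹' S) := by
    intro x
    ext t
    simp only [Set.mem_setOf_eq, Set.mem_preimage, eqv_symm_apply, aux_update_eq]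
  simp_rw [key]
  exact (measurable_measure_prodMk_right hS2).comp
    (measurable_pi_lambda _ fun j => measurable_pi_apply _)

lemma aux_slice_null {S : Set (Fin (n + 1) → ℝ)} (hS : MeasurableSet S)
    (h : ∀ x : Fin (n + 1) → ℝ, volume {t : ℝ | Function.update x k t ∈ S} = 0) :
    volume S = 0 := by
  have hS2 : MeasurableSet ((eqv k).symm ⁻¹' S) := (eqv k).symm.measurable hS
  have hvol : volume S = ((volume : Measure ℝ).prod volume) ((eqv k).symm ⁻¹' S) := by
    have h1 := (eqv_measurePreserving k).measure_preimage hS2.nullMeasurableSet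
    have h2 : (eqv k) ⁻¹' ((eqv k).symm ⁻¹' S) = S := by
      ext x; simp
    rw [h2] at h1
    exact h1
  rw [hvol, Measure.prod_apply_symm hS2]
  rw [lintegral_eq_zero_iff (measurable_measure_prodMk_right hS2)]
  refine Filter.Eventually.of_forall fun w => ?_
  have key : ((fun x => (x, w)) ⁻¹' ((eqv k).symm ⁻¹' S))
      = {t : ℝ | Function.update (Fin.insertNth k 0 w) k t ∈ S} := by
    ext t
    simp only [Set.mem_preimage, eqv_symm_apply, Set.mem_setOf_eq,
      Fin.update_insertNth]
  show volume ((fun x => (x, w)) ⁻¹' ((eqv k).symm ⁻¹' S)) = (0 : ENNReal)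
  rw [key]
  exact h _

end Fubini

lemma aux_insertNth_update {n : ℕ} (p : Fin (n + 1)) (a : ℝ) (w : Fin n → ℝ)
    (j : Fin n) (s : ℝ) :
    (Fin.insertNth p a (Function.update w j s) : Fin (n + 1) → ℝ)
      = Function.update (Fin.insertNth p a w : Fin (n + 1) → ℝ) (p.succAbove j) s := by
  ext i
  cases i using p.succAboveCases with
  | x =>
    rw [Fin.insertNth_apply_same, Function.update_of_ne (Fin.succAbove_ne p j).symm,
      Fin.insertNth_apply_same]
  | p i =>
    rw [Fin.insertNth_apply_succAbove]
    by_cases h : i = j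
    · subst h
      rw [Function.update_self, Function.update_self]
    · rw [Function.update_of_ne h, Function.update_of_ne
        (fun hc => h (Fin.succAbove_right_injective hc)), Fin.insertNth_apply_succAbove]

lemma aux_measurable : ∀ {n : ℕ} (I : Fin n → Set ℝ) (_hIopen : ∀ k, IsOpen (I k))
    (f : (Fin n → ℝ) → ℝ)
    (_hf : ∀ (k) (x : Fin n → ℝ), ContinuousOn (fun t => f (Function.update x k t)) (I k)),
    Measurable fun y : (∀ i, ↥(I i)) => f (fun i => (y i : ℝ)) := by
  intro n
  induction n with
  | zero =>
    intro I _ f _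
    exact Subsingleton.measurable
  | succ n IH =>
    intro I hIopen f hf
    let E := MeasurableEquiv.piFinSuccAbove (fun i => ↥(I i)) 0
    set u : ↥(I 0) → (∀ j : Fin n, ↥(I ((0 : Fin (n+1)).succAbove j))) → ℝ :=
      fun a w => f (Fin.insertNth 0 (a : ℝ) (fun j => (w j : ℝ))) with hu
    have hcont : ∀ w, Continuous fun a => u a w := by
      intro w
      have h1 := (hf 0 (Fin.insertNth 0 0 (fun j => (w j : ℝ)))).restrict
      convert h1 using 1
      funext a
      simp only [u, Set.restrict_apply, Fin.update_insertNth]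
    have hmeas : ∀ a, Measurable (u a) := by
      intro a
      exact IH (fun j => I ((0 : Fin (n+1)).succAbove j)) (fun j => hIopen _)
        (fun z => f (Fin.insertNth 0 (a : ℝ) z))
        (by
          intro j y
          have := hf ((0 : Fin (n+1)).succAbove j) (Fin.insertNth 0 (a : ℝ) y)
          exact this.congr fun t ht => by
            show f (Fin.insertNth 0 (a : ℝ) (Function.update y j t)) = _
            rw [aux_insertNth_update])
    have hkey := measurable_uncurry_of_continuous_of_measurable hcont hmeas
    have heq : (fun y : (∀ i, ↥(I i)) => f (fun i => (y i : ℝ)))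
        = Function.uncurry u ∘ E := by
      funext y
      show f (fun i => (y i : ℝ)) = u ((E y).1) ((E y).2)
      have h2 : ((E y).1 : ℝ) = (y 0 : ℝ) := rfl
      have h3 : ∀ j, (((E y).2 j : ℝ)) = (y ((0 : Fin (n+1)).succAbove j) : ℝ) := fun j => rfl
      rw [hu]
      simp only [h2, h3]
      congr 1
      exact (Fin.insertNth_self_removeNth 0 (fun i => (y i : ℝ))).symm
    rw [heq]
    exact hkey.comp E.measurable

lemma aux_extension {q : ℕ} (I : Fin q → Set ℝ) (hIopen : ∀ k, IsOpen (I k))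
    (f : (Fin q → ℝ) → ℝ)
    (hf : ∀ (k) (x : Fin q → ℝ), ContinuousOn (fun t => f (Function.update x k t)) (I k)) :
    ∃ H : (Fin q → ℝ) → ℝ, Measurable H ∧ ∀ x ∈ Set.univ.pi I, H x = f x := by
  haveI : ∀ i, PolishSpace ↥(I i) := fun i => (hIopen i).polishSpace
  let T : (∀ i, ↥(I i)) → (Fin q → ℝ) := fun y i => (y i : ℝ)
  have hTc : Continuous T :=
    continuous_pi fun i => continuous_subtype_val.comp (continuous_apply i)
  have hTi : Function.Injective T := fun y z h => funext fun i => Subtype.ext (congrFun h i)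
  have hTemb : MeasurableEmbedding T := hTc.measurableEmbedding hTi
  obtain ⟨H, hHm, hHe⟩ := hTemb.exists_measurable_extend
    (aux_measurable I hIopen f hf) (fun _ => ⟨0⟩)
  refine ⟨H, hHm, fun x hx => ?_⟩
  have hx' : x = T (fun i => ⟨x i, hx i (Set.mem_univ i)⟩) := by funext i; rfl
  rw [hx']
  exact congrFun hHe _


open Fin.NatCast in
/-- Theorem 5.1: identifiability plus coordinatewise holomorphic
extendability implies local identifiability. -/
theorem stmt10 {Ξ : Type*} {q : ℕ}
    (I : Fin q → Set ℝ)
    (hIopen : ∀ k, IsOpen (I k))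
    (hIconn : ∀ k, (I k).OrdConnected)
    (hInonempty : ∀ k, (I k).Nonempty)
    (g : Ξ → (Fin q → ℝ) → ℝ)
    (hpos : ∀ ξ x, 0 < g ξ x)
    (hident : ∀ (m : ℕ) (ξ : Fin m → Ξ), Function.Injective ξ →
      ∀ β : Fin m → ℝ,
        (∀ᵐ x ∂(volume.restrict (Set.univ.pi I)), ∑ j, β j * g (ξ j) x = 0) →
        ∀ j, β j = 0)
    (hholo : ∀ (ξ : Ξ) (k : Fin q) (x : Fin q → ℝ),
      ∃ (U : Set ℂ) (F : ℂ → ℂ), IsOpen U ∧ (Complex.ofReal '' I k) ⊆ U ∧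
        DifferentiableOn ℂ F U ∧
        ∀ t ∈ I k, F (t : ℂ) = (g ξ (Function.update x k t) : ℂ)) :
    ∀ (m : ℕ) (ξ : Fin m → Ξ), Function.Injective ξ →
      ∀ β : Fin m → ℝ,
        0 < volume {x ∈ Set.univ.pi I | ∑ j, β j * g (ξ j) x = 0} →
        ∀ j, β j = 0 := by
  intro m ξ hξ β hvol j
  by_cases hq : q = 0
  · subst hq
    haveI : Subsingleton (Fin 0 → ℝ) := ⟨fun a b => funext fun i => i.elim0⟩
    obtain ⟨x₀, hx₀⟩ := nonempty_of_measure_ne_zero hvol.ne'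
    refine hident m ξ hξ β (ae_of_all _ fun x => ?_) j
    rw [Subsingleton.elim x x₀]
    exact hx₀.2
  obtain ⟨n, rfl⟩ : ∃ n, q = n + 1 :=
    ⟨q - 1, (Nat.succ_pred_eq_of_pos (Nat.pos_of_ne_zero hq)).symm⟩
  set h : (Fin (n + 1) → ℝ) → ℝ := fun x => ∑ j, β j * g (ξ j) x with hh
  -- holomorphic extension data for h
  have hholo_h : ∀ (k : Fin (n + 1)) (x : Fin (n + 1) → ℝ),
      ∃ (U : Set ℂ) (F : ℂ → ℂ), IsOpen U ∧ (Complex.ofReal '' I k) ⊆ U ∧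
        DifferentiableOn ℂ F U ∧
        ∀ t ∈ I k, F (t : ℂ) = (h (Function.update x k t) : ℂ) := by
    intro k x
    choose U F h1 h2 h3 h4 using fun j : Fin m => hholo (ξ j) k x
    refine ⟨⋂ j, U j, fun z => ∑ j, (β j : ℂ) * F j z,
      isOpen_iInter_of_finite h1, Set.subset_iInter h2, ?_, ?_⟩
    · exact DifferentiableOn.fun_sum fun j _ =>
        ((h3 j).mono (Set.iInter_subset U j)).const_mul _
    · intro t ht
      rw [hh]
      push_cast
      exact Finset.sum_congr rfl fun j _ => by rw [h4 j t ht]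
  -- separate continuity of h on the box
  have hSC : ∀ (k : Fin (n + 1)) (x : Fin (n + 1) → ℝ),
      ContinuousOn (fun t => h (Function.update x k t)) (I k) := by
    intro k x
    obtain ⟨U, F, hUo, hUs, hFd, hFe⟩ := hholo_h k x
    have hc : ContinuousOn (fun t : ℝ => (F (t : ℂ)).re) (I k) :=
      Complex.continuous_re.comp_continuousOn
        ((hFd.continuousOn).comp Complex.continuous_ofReal.continuousOn
          fun t ht => hUs ⟨t, ht, rfl⟩)
    exact hc.congr fun t ht => by beta_reduce; rw [hFe t ht, Complex.ofReal_re]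
  obtain ⟨H, hHm, hHe⟩ := aux_extension I hIopen h hSC
  set Z0 : Set (Fin (n + 1) → ℝ) := Set.univ.pi I ∩ H ⁻¹' {0} with hZ0
  have hZ0meas : MeasurableSet Z0 :=
    (MeasurableSet.univ_pi fun i => (hIopen i).measurableSet).inter
      (hHm (measurableSet_singleton 0))
  have hZ0h : ∀ x ∈ Z0, x ∈ Set.univ.pi I ∧ h x = 0 := by
    intro x hx
    exact ⟨hx.1, by rw [← hHe x hx.1]; exact hx.2⟩
  have hset : {x ∈ Set.univ.pi I | ∑ j, β j * g (ξ j) x = 0} = Z0 := by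
    ext x
    simp only [Set.mem_setOf_eq, hZ0, Set.mem_inter_iff, Set.mem_preimage,
      Set.mem_singleton_iff]
    constructor
    · rintro ⟨hx1, hx2⟩; exact ⟨hx1, by rw [hHe x hx1]; exact hx2⟩
    · rintro ⟨hx1, hx2⟩
      refine ⟨hx1, ?_⟩
      show h x = 0
      rw [← hHe x hx1]; exact hx2
  rw [hset] at hvol
  -- the chain of sets
  let ZC : ℕ → Set (Fin (n + 1) → ℝ) := fun k =>
    Nat.rec Z0 (fun k Zk => Zk ∩
      {x | volume {t | Function.update x (k : Fin (n + 1)) t ∈ Zk} ≠ 0}) k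
  have hZCsucc : ∀ k : ℕ, ZC (k + 1) = ZC k ∩
      {x | volume {t | Function.update x (k : Fin (n + 1)) t ∈ ZC k} ≠ 0} :=
    fun k => rfl
  have hmeas : ∀ k, MeasurableSet (ZC k) := by
    intro k
    induction k with
    | zero => exact hZ0meas
    | succ k ih =>
      rw [hZCsucc]
      exact ih.inter ((aux_slice_measurable _ ih) (measurableSet_singleton 0).compl)
  have hsub : ∀ k, ZC k ⊆ Z0 := by
    intro k
    induction k with
    | zero => exact subset_rfl
    | succ k ih => rw [hZCsucc]; exact Set.inter_subset_left.trans ih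
  have hvolZ : ∀ k, volume (ZC k) ≠ 0 := by
    intro k
    induction k with
    | zero => exact hvol.ne'
    | succ k ih =>
      have hD : volume (ZC k \ ZC (k + 1)) = 0 := by
        apply aux_slice_null (k : Fin (n + 1)) ((hmeas k).diff (hmeas (k + 1)))
        intro x
        set κ : Fin (n + 1) := (k : Fin (n + 1))
        set A := {t | Function.update x κ t ∈ ZC k} with hA
        have hconst : ∀ t s : ℝ,
            (Function.update (Function.update x κ t) κ s ∈ ZC k) ↔ s ∈ A := by
          intro t s
          rw [Function.update_idem]
          exact Iff.rfl
        by_cases hAv : volume A = 0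
        · refine measure_mono_null ?_ hAv
          intro t ht
          exact ht.1
        · have hemp : {t | Function.update x κ t ∈ ZC k \ ZC (k + 1)} = (∅ : Set ℝ) := by
            ext t
            simp only [Set.mem_setOf_eq, Set.mem_empty_iff_false, iff_false]
            intro ht
            refine ht.2 ?_
            rw [hZCsucc]
            refine ⟨ht.1, ?_⟩
            show volume {s | Function.update (Function.update x κ t) κ s ∈ ZC k} ≠ 0
            have : {s | Function.update (Function.update x κ t) κ s ∈ ZC k} = A := by
              ext s; exact hconst t s
            rw [this]
            exact hAv
          rw [show {t | Function.update x (↑k : Fin (n + 1)) t ∈ ZC k \ ZC (k + 1)} = (∅ : Set ℝ) from hemp]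
          exact measure_empty
      intro h0
      apply ih
      have hsplit : ZC k ⊆ ZC (k + 1) ∪ (ZC k \ ZC (k + 1)) := by
        intro x hx
        rcases Classical.em (x ∈ ZC (k + 1)) with hx2 | hx2
        · exact Or.inl hx2
        · exact Or.inr ⟨hx, hx2⟩
      refine le_antisymm ?_ (zero_le)
      calc volume (ZC k) ≤ volume (ZC (k + 1) ∪ (ZC k \ ZC (k + 1))) :=
            measure_mono hsplit
        _ ≤ volume (ZC (k + 1)) + volume (ZC k \ ZC (k + 1)) := measure_union_le _ _
        _ = 0 := by rw [h0, hD, add_zero]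
  -- the vanishing statement
  have hvanish : ∀ k, k ≤ n + 1 → ∀ x ∈ ZC k, ∀ y : Fin (n + 1) → ℝ,
      (∀ i : Fin (n + 1), (i : ℕ) < k → y i ∈ I i) →
      h (fun i => if (i : ℕ) < k then y i else x i) = 0 := by
    intro k
    induction k with
    | zero =>
      intro _ x hx y _
      simp only [Nat.not_lt_zero, if_false]
      exact (hZ0h x hx).2
    | succ k ihk =>
      intro hk1 x hx y hy
      rw [hZCsucc] at hx
      set κ : Fin (n + 1) := (k : Fin (n + 1)) with hκdef
      have hκ : (κ : ℕ) = k := Fin.val_cast_of_lt (Nat.lt_succ_of_le (Nat.succ_le_succ_iff.mp hk1))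
      set T := {t | Function.update x κ t ∈ ZC k} with hTdef
      have hT : volume T ≠ 0 := hx.2
      have hTsub : T ⊆ I κ := by
        intro t ht
        have h1 := (hsub k ht).1 κ (Set.mem_univ κ)
        rwa [Function.update_self] at h1
      have hTunc : ¬ T.Countable := fun hc => hT (hc.measure_zero _)
      set x' : Fin (n + 1) → ℝ := fun i => if (i : ℕ) < k then y i else x i with hx'
      have hφ : ∀ t ∈ T, h (Function.update x' κ t) = 0 := by
        intro t ht
        have heqpt : Function.update x' κ t
            = fun i : Fin (n + 1) => if (i : ℕ) < k then y i else (Function.update x κ t) i := by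
          funext i
          by_cases hik : i = κ
          · subst hik
            rw [Function.update_self, if_neg (by omega), Function.update_self]
          · rw [Function.update_of_ne hik]
            show (if (i : ℕ) < k then y i else x i) = _
            by_cases hlt : (i : ℕ) < k
            · rw [if_pos hlt, if_pos hlt]
            · rw [if_neg hlt, if_neg hlt, Function.update_of_ne hik]
        rw [heqpt]
        exact ihk (by omega) _ ht y (fun i hik => hy i (Nat.lt_succ_of_lt hik))
      obtain ⟨U, F, hUo, hUs, hFd, hFe⟩ := hholo_h κ x'
      have hall : ∀ t ∈ I κ, h (Function.update x' κ t) = 0 :=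
        aux_identity (hIconn κ) (fun t => h (Function.update x' κ t)) U F hUo hUs hFd
          hFe T hTsub hTunc hφ
      have hyκ : y κ ∈ I κ := hy κ (by omega)
      have hfinal : Function.update x' κ (y κ)
          = fun i : Fin (n + 1) => if (i : ℕ) < k + 1 then y i else x i := by
        funext i
        by_cases hik : i = κ
        · subst hik
          rw [Function.update_self, if_pos (by omega)]
        · have hik' : (i : ℕ) ≠ k := by
            intro hc
            exact hik (Fin.ext (by rw [hc, hκ]))
          rw [Function.update_of_ne hik]
          show (if (i : ℕ) < k then y i else x i) = _
          by_cases hlt : (i : ℕ) < k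
          · rw [if_pos hlt, if_pos (by omega)]
          · rw [if_neg hlt, if_neg (by omega)]
      rw [← hfinal]
      exact hall (y κ) hyκ
  obtain ⟨x₀, hx₀⟩ := nonempty_of_measure_ne_zero (hvolZ (n + 1))
  have hzero : ∀ x ∈ Set.univ.pi I, h x = 0 := by
    intro x hxI
    have hv := hvanish (n + 1) le_rfl x₀ hx₀ x (fun i _ => hxI i (Set.mem_univ i))
    have hxx : (fun i : Fin (n + 1) => if (i : ℕ) < n + 1 then x i else x₀ i) = x :=
      funext fun i => if_pos i.isLt
    rwa [hxx] at hv
  refine hident m ξ hξ β ?_ j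
  rw [ae_restrict_iff' (MeasurableSet.univ_pi fun i => (hIopen i).measurableSet)]
  exact ae_of_all _ hzero
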